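/- arXiv:2410.19715 — 3 statements merged into one kernel-verified Lean document; each statement's English description precedes it below -/
import Mathlib

section
/- Let Θ be a nonempty finite type, f : Θ → ℝ, and ω > 0. The maximum over all probability vectors Λ on Θ of Σ_θ Λ(θ)·f(θ) + (1/ω)·H(Λ) equals (1/ω) · log (Σ_θ exp(ω · f θ)). (The optimal value of the entropy-regularized objective is the scaled log-sum-exp of f.) -/
/-- The maximum over probability vectors `Λ` on a nonempty finite type `Θ` of the
entropy-regularized objective `Σ Λ θ * f θ + (1/ω) * H(Λ)` equals the scaled
log-sum-exp `(1/ω) * log (Σ exp (ω * f θ))`. -/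
theorem entropy_regularized_max_eq_logSumExp
    {Θ : Type*} [Fintype Θ] [Nonempty Θ] (f : Θ → ℝ) (ω : ℝ) (hω : 0 < ω) :
    IsGreatest
      { v : ℝ | ∃ Λ : Θ → ℝ, (∀ θ, 0 ≤ Λ θ) ∧ (∑ θ, Λ θ) = 1 ∧
          v = (∑ θ, Λ θ * f θ) + (1 / ω) * (-∑ θ, Λ θ * Real.log (Λ θ)) }
      ((1 / ω) * Real.log (∑ θ, Real.exp (ω * f θ))) := by
  set Z : ℝ := ∑ θ, Real.exp (ω * f θ) with hZ
  have hZpos : 0 < Z := Finset.sum_pos (fun θ _ => Real.exp_pos _) Finset.univ_nonempty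
  have hωne : ω ≠ 0 := ne_of_gt hω
  constructor
  · refine ⟨fun θ => Real.exp (ω * f θ) / Z, fun θ => by positivity, ?_, ?_⟩
    · rw [← Finset.sum_div, ← hZ, div_self (ne_of_gt hZpos)]
    · have hlog : ∀ θ, Real.log (Real.exp (ω * f θ) / Z) = ω * f θ - Real.log Z := by
        intro θ
        rw [Real.log_div (Real.exp_ne_zero _) (ne_of_gt hZpos), Real.log_exp]
      have hsum1 : ∑ θ, Real.exp (ω * f θ) / Z = 1 := by
        rw [← Finset.sum_div, ← hZ, div_self (ne_of_gt hZpos)]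
      have h1 : ∑ θ, Real.exp (ω * f θ) / Z * Real.log (Real.exp (ω * f θ) / Z)
          = ω * (∑ θ, Real.exp (ω * f θ) / Z * f θ) - Real.log Z := by
        rw [Finset.mul_sum]
        have : ∀ θ ∈ Finset.univ, Real.exp (ω * f θ) / Z * Real.log (Real.exp (ω * f θ) / Z)
            = ω * (Real.exp (ω * f θ) / Z * f θ) - Real.exp (ω * f θ) / Z * Real.log Z := by
          intro θ _
          rw [hlog θ]; ring
        rw [Finset.sum_congr rfl this, Finset.sum_sub_distrib, ← Finset.sum_mul, hsum1, one_mul]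
      rw [h1]
      field_simp
      ring
  · rintro v ⟨Λ, hpos, hsum, rfl⟩
    have key : ∑ θ, Λ θ * (ω * f θ - Real.log (Λ θ) - Real.log Z) ≤ 0 := by
      have hterm : ∀ θ ∈ Finset.univ, Λ θ * (ω * f θ - Real.log (Λ θ) - Real.log Z)
          ≤ Real.exp (ω * f θ) / Z - Λ θ := by
        intro θ _
        rcases eq_or_lt_of_le (hpos θ) with h0 | h0
        · rw [← h0]
          simp [le_sub_iff_add_le]
          positivity
        · have hx : 0 < Real.exp (ω * f θ) / (Z * Λ θ) := by positivity
          have hle := Real.log_le_sub_one_of_pos hx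
          have hlogeq : Real.log (Real.exp (ω * f θ) / (Z * Λ θ))
              = ω * f θ - Real.log (Λ θ) - Real.log Z := by
            rw [Real.log_div (Real.exp_ne_zero _) (by positivity),
              Real.log_mul (ne_of_gt hZpos) (ne_of_gt h0), Real.log_exp]
            ring
          rw [hlogeq] at hle
          have := mul_le_mul_of_nonneg_left hle (le_of_lt h0)
          calc Λ θ * (ω * f θ - Real.log (Λ θ) - Real.log Z)
              ≤ Λ θ * (Real.exp (ω * f θ) / (Z * Λ θ) - 1) := this
            _ = Real.exp (ω * f θ) / Z - Λ θ := by
                field_simp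
      calc ∑ θ, Λ θ * (ω * f θ - Real.log (Λ θ) - Real.log Z)
          ≤ ∑ θ, (Real.exp (ω * f θ) / Z - Λ θ) := Finset.sum_le_sum hterm
        _ = 0 := by
            rw [Finset.sum_sub_distrib, ← Finset.sum_div, ← hZ, div_self (ne_of_gt hZpos), hsum]
            ring
    have expand : ∑ θ, Λ θ * (ω * f θ - Real.log (Λ θ) - Real.log Z)
        = ω * (∑ θ, Λ θ * f θ) - (∑ θ, Λ θ * Real.log (Λ θ)) - Real.log Z := by
      have : ∀ θ ∈ Finset.univ, Λ θ * (ω * f θ - Real.log (Λ θ) - Real.log Z)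
          = ω * (Λ θ * f θ) - Λ θ * Real.log (Λ θ) - Λ θ * Real.log Z := by
        intro θ _; ring
      rw [Finset.sum_congr rfl this, Finset.sum_sub_distrib, Finset.sum_sub_distrib,
        ← Finset.mul_sum, ← Finset.sum_mul, hsum, one_mul]
    rw [expand] at key
    have h2 : ω * (∑ θ, Λ θ * f θ) + (-∑ θ, Λ θ * Real.log (Λ θ)) ≤ Real.log Z := by
      linarith
    have := mul_le_mul_of_nonneg_left h2 (le_of_lt (one_div_pos.mpr hω))
    calc (∑ θ, Λ θ * f θ) + (1 / ω) * (-∑ θ, Λ θ * Real.log (Λ θ))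
        = (1 / ω) * (ω * (∑ θ, Λ θ * f θ) + (-∑ θ, Λ θ * Real.log (Λ θ))) := by
          field_simp
      _ ≤ (1 / ω) * Real.log Z := this
end

section
/- (Lemma A.2, minimax duality on the convex hull.) Let n be a natural number, let D̄ ⊆ ℝ^n be a nonempty convex compact set, let Θ be a nonempty finite type, let ω > 0, and let c : ℝ^n → Θ → ℝ be such that for each θ the map ρ ↦ c ρ θ is affine (hence continuous). Define L̄(ρ, Λ) = Σ_θ (c ρ θ) · (Λ θ) + (1/ω) · H(Λ) for ρ ∈ ℝ^n and probability vectors Λ on Θ. Then min_{ρ ∈ D̄} max_{Λ ∈ Δ(Θ)} L̄(ρ, Λ) = max_{Λ ∈ Δ(Θ)} min_{ρ ∈ D̄} L̄(ρ, Λ), where Δ(Θ) denotes the set of probability vectors on Θ, and both the outer minimum and the outer maximum are attained. -/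
open Real Finset

section Aux
variable {Θ : Type*} [Fintype Θ] [Nonempty Θ]

lemma sumexp_pos' (x : Θ → ℝ) : 0 < ∑ θ, Real.exp (x θ) :=
  Finset.sum_pos (fun θ _ => Real.exp_pos _) Finset.univ_nonempty

lemma gibbs_le' (x Λ : Θ → ℝ) (h0 : ∀ θ, 0 ≤ Λ θ) (h1 : ∑ θ, Λ θ = 1) :
    (∑ θ, Λ θ * x θ) - ∑ θ, Λ θ * Real.log (Λ θ) ≤ Real.log (∑ θ, Real.exp (x θ)) := by
  set Z := ∑ θ, Real.exp (x θ) with hZ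
  have hZpos : 0 < Z := sumexp_pos' x
  have key : ∀ θ, Λ θ * x θ - Λ θ * Real.log (Λ θ) - Λ θ * Real.log Z
      ≤ Real.exp (x θ) / Z - Λ θ := by
    intro θ
    rcases eq_or_lt_of_le (h0 θ) with h | h
    · rw [← h]; simp; positivity
    · have hp : 0 < Real.exp (x θ) / Z / Λ θ := by positivity
      have hlog := Real.log_le_sub_one_of_pos hp
      have hval : Real.log (Real.exp (x θ) / Z / Λ θ)
          = x θ - Real.log Z - Real.log (Λ θ) := by
        rw [Real.log_div (by positivity) h.ne', Real.log_div (Real.exp_ne_zero _) hZpos.ne',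
          Real.log_exp]
      rw [hval] at hlog
      have h2 := mul_le_mul_of_nonneg_left hlog (h0 θ)
      have h3 : Λ θ * (Real.exp (x θ) / Z / Λ θ - 1) = Real.exp (x θ) / Z - Λ θ := by
        field_simp
      nlinarith [h2, h3]
  have hsum := Finset.sum_le_sum (s := Finset.univ) (fun θ _ => key θ)
  have hL : ∑ θ, (Λ θ * x θ - Λ θ * Real.log (Λ θ) - Λ θ * Real.log Z)
      = (∑ θ, Λ θ * x θ) - (∑ θ, Λ θ * Real.log (Λ θ)) - Real.log Z := by
    rw [Finset.sum_sub_distrib, Finset.sum_sub_distrib, ← Finset.sum_mul, h1, one_mul]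
  have hR : ∑ θ, (Real.exp (x θ) / Z - Λ θ) = 0 := by
    rw [Finset.sum_sub_distrib, h1, ← Finset.sum_div, div_self hZpos.ne']
    ring
  rw [hL, hR] at hsum
  linarith

lemma softmax_nonneg' (x : Θ → ℝ) (θ : Θ) :
    0 ≤ Real.exp (x θ) / ∑ θ', Real.exp (x θ') := by positivity

lemma softmax_sum_one' (x : Θ → ℝ) :
    ∑ θ, Real.exp (x θ) / ∑ θ', Real.exp (x θ') = 1 := by
  rw [← Finset.sum_div, div_self (sumexp_pos' x).ne']

lemma gibbs_eq' (x : Θ → ℝ) :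
    (∑ θ, (Real.exp (x θ) / ∑ θ', Real.exp (x θ')) * x θ)
      - ∑ θ, (Real.exp (x θ) / ∑ θ', Real.exp (x θ'))
          * Real.log (Real.exp (x θ) / ∑ θ', Real.exp (x θ'))
      = Real.log (∑ θ, Real.exp (x θ)) := by
  set Z := ∑ θ', Real.exp (x θ') with hZ
  have hZpos : 0 < Z := sumexp_pos' x
  have hlog : ∀ θ, Real.log (Real.exp (x θ) / Z) = x θ - Real.log Z := fun θ => by
    rw [Real.log_div (Real.exp_ne_zero _) hZpos.ne', Real.log_exp]
  have : ∑ θ, (Real.exp (x θ) / Z) * Real.log (Real.exp (x θ) / Z)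
      = (∑ θ, (Real.exp (x θ) / Z) * x θ) - Real.log Z := by
    have h1 : ∑ θ, (Real.exp (x θ) / Z) * Real.log (Real.exp (x θ) / Z)
        = ∑ θ, ((Real.exp (x θ) / Z) * x θ - (Real.exp (x θ) / Z) * Real.log Z) :=
      Finset.sum_congr rfl fun θ _ => by rw [hlog θ]; ring
    have hsum1 : ∑ θ, Real.exp (x θ) / Z = 1 := by
      rw [← Finset.sum_div, div_self hZpos.ne']
    rw [h1, Finset.sum_sub_distrib, ← Finset.sum_mul, hsum1, one_mul]
  rw [this]; ring

/-- Danskin-type lemma: if `a` minimizes logsumexp along the segment towards `b`,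
then the softmax at `a` weights `b` at least as much as `a`. -/
lemma softmax_min_dir' (ω : ℝ) (hω : 0 < ω) (a b : Θ → ℝ)
    (hmin : ∀ t ∈ Set.Icc (0:ℝ) 1,
      Real.log (∑ θ, Real.exp (ω * a θ)) ≤
      Real.log (∑ θ, Real.exp (ω * ((1 - t) * a θ + t * b θ)))) :
    ∑ θ, (Real.exp (ω * a θ) / ∑ θ', Real.exp (ω * a θ')) * a θ ≤
    ∑ θ, (Real.exp (ω * a θ) / ∑ θ', Real.exp (ω * a θ')) * b θ := by
  classical
  set g : ℝ → ℝ := fun t => ∑ θ, Real.exp (ω * a θ + t * (ω * (b θ - a θ))) with hg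
  have hgpos : ∀ t, 0 < g t := fun t => sumexp_pos' _
  have hg0 : g 0 = ∑ θ, Real.exp (ω * a θ) := by simp [hg]
  have hgle : ∀ t ∈ Set.Icc (0:ℝ) 1, g 0 ≤ g t := by
    intro t ht
    have hrw : g t = ∑ θ, Real.exp (ω * ((1 - t) * a θ + t * b θ)) := by
      apply Finset.sum_congr rfl
      intro θ _
      congr 1
      ring
    have := hmin t ht
    rw [← hg0, ← hrw] at this
    exact (Real.log_le_log_iff (hgpos 0) (hgpos t)).mp this
  set D : ℝ := ∑ θ, (ω * (b θ - a θ)) * Real.exp (ω * a θ) with hD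
  have hderiv : HasDerivAt g D 0 := by
    have : ∀ θ ∈ Finset.univ (α := Θ),
        HasDerivAt (fun t => Real.exp (ω * a θ + t * (ω * (b θ - a θ))))
          ((ω * (b θ - a θ)) * Real.exp (ω * a θ)) 0 := by
      intro θ _
      have h1 : HasDerivAt (fun t : ℝ => ω * a θ + t * (ω * (b θ - a θ)))
          (ω * (b θ - a θ)) 0 := by
        simpa using ((hasDerivAt_id (0:ℝ)).mul_const (ω * (b θ - a θ))).const_add (ω * a θ)
      have := h1.exp
      simpa [mul_comm] using this
    exact HasDerivAt.fun_sum this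
  have hDnonneg : 0 ≤ D := by
    have hW := (hderiv.hasDerivWithinAt (s := Set.Ioi (0:ℝ)))
    rw [hasDerivWithinAt_iff_tendsto_slope] at hW
    have hdiff : Set.Ioi (0:ℝ) \ {0} = Set.Ioi 0 :=
      Set.diff_singleton_eq_self (by simp)
    rw [hdiff] at hW
    have hev : ∀ᶠ t in nhdsWithin (0:ℝ) (Set.Ioi (0:ℝ)), 0 ≤ slope g 0 t := by
      filter_upwards [Ioc_mem_nhdsGT_of_mem (Set.mem_Ico.mpr ⟨le_refl 0, one_pos⟩)] with t ht
      rw [slope_def_field]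
      apply div_nonneg (sub_nonneg.2 (hgle t ⟨le_of_lt ht.1, ht.2⟩))
      simp [le_of_lt ht.1]
    exact ge_of_tendsto hW hev
  have hS : 0 < ∑ θ', Real.exp (ω * a θ') := sumexp_pos' _
  have hsum : 0 ≤ ∑ θ, (b θ - a θ) * Real.exp (ω * a θ) := by
    have : D = ω * ∑ θ, (b θ - a θ) * Real.exp (ω * a θ) := by
      rw [Finset.mul_sum]; exact Finset.sum_congr rfl fun θ _ => by ring
    nlinarith [hDnonneg, this]
  rw [← sub_nonneg, ← Finset.sum_sub_distrib]
  have : ∀ θ, (Real.exp (ω * a θ) / ∑ θ', Real.exp (ω * a θ')) * b θ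
      - (Real.exp (ω * a θ) / ∑ θ', Real.exp (ω * a θ')) * a θ
      = ((b θ - a θ) * Real.exp (ω * a θ)) / (∑ θ', Real.exp (ω * a θ')) := fun θ => by
    ring
  rw [Finset.sum_congr rfl fun θ _ => this θ, ← Finset.sum_div]
  positivity

end Aux

lemma affine_continuous' {n : ℕ} (g : (Fin n → ℝ) → ℝ)
    (haff : ∀ (x y : Fin n → ℝ) (t : ℝ),
      g (t • x + (1 - t) • y) = t * g x + (1 - t) * g y) :
    Continuous g := by
  set L : (Fin n → ℝ) → ℝ := fun x => g x - g 0 with hLdef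
  have hsmul : ∀ (t : ℝ) (x : Fin n → ℝ), g (t • x) = t * g x + (1 - t) * g 0 := by
    intro t x
    have := haff x 0 t
    simpa using this
  have hLs : ∀ (t : ℝ) (x : Fin n → ℝ), L (t • x) = t * L x := by
    intro t x
    simp only [hLdef, hsmul t x]
    ring
  have hLa : ∀ x y : Fin n → ℝ, L (x + y) = L x + L y := by
    intro x y
    have hmid : g ((2:ℝ)⁻¹ • (x + y)) = (2:ℝ)⁻¹ * g x + (2:ℝ)⁻¹ * g y := by
      have := haff x y (2:ℝ)⁻¹
      have h2 : (2:ℝ)⁻¹ • (x + y) = (2:ℝ)⁻¹ • x + (1 - (2:ℝ)⁻¹) • y := by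
        rw [smul_add]
        norm_num
      rw [h2, this]
      norm_num
    have h2 : L (x + y) = 2 * L ((2:ℝ)⁻¹ • (x + y)) := by
      rw [← hLs 2]
      norm_num [smul_smul]
    rw [h2]
    simp only [hLdef, hmid]
    ring
  have : IsLinearMap ℝ L := ⟨hLa, fun t x => hLs t x⟩
  have hLcont : Continuous L := (this.mk' L).continuous_of_finiteDimensional
  have : g = fun x => L x + g 0 := by
    funext x
    simp [hLdef]
  rw [this]
  exact hLcont.add continuous_const

lemma scale_le' (ω X E Z : ℝ) (hω : 0 < ω) (h : ω * X - E ≤ Z) :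
    X + (1 / ω) * (-E) ≤ (1 / ω) * Z := by
  have h2 := mul_le_mul_of_nonneg_left h (by positivity : (0:ℝ) ≤ 1 / ω)
  have h3 : (1 / ω) * (ω * X - E) = X + (1 / ω) * (-E) := by
    field_simp
    ring
  linarith

lemma scale_eq' (ω X E Z : ℝ) (hω : 0 < ω) (h : ω * X - E = Z) :
    X + (1 / ω) * (-E) = (1 / ω) * Z := by
  have h3 : (1 / ω) * (ω * X - E) = X + (1 / ω) * (-E) := by
    field_simp
    ring
  rw [← h, h3]

set_option maxHeartbeats 1000000 in
/-- Lemma A.2 (minimax duality on the convex hull): for a nonempty convex compact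
set `D̄ ⊆ ℝ^n`, a nonempty finite type `Θ`, `ω > 0`, and `c` affine in `ρ`,
`min_{ρ ∈ D̄} max_{Λ ∈ Δ(Θ)} L̄(ρ,Λ) = max_{Λ ∈ Δ(Θ)} min_{ρ ∈ D̄} L̄(ρ,Λ)`,
with both the outer minimum and outer maximum attained, where
`L̄(ρ,Λ) = Σ_θ c ρ θ * Λ θ + (1/ω) * H(Λ)`. -/
theorem minimax_duality_convex_hull
    {n : ℕ} (Dbar : Set (Fin n → ℝ)) (hne : Dbar.Nonempty)
    (hconv : Convex ℝ Dbar) (hcomp : IsCompact Dbar)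
    {Θ : Type*} [Fintype Θ] [Nonempty Θ] (ω : ℝ) (hω : 0 < ω)
    (c : (Fin n → ℝ) → Θ → ℝ)
    (haff : ∀ (θ : Θ) (x y : Fin n → ℝ) (t : ℝ),
      c (t • x + (1 - t) • y) θ = t * c x θ + (1 - t) * c y θ) :
    ∃ v : ℝ,
      IsLeast { w : ℝ | ∃ ρ ∈ Dbar,
        w = sSup { u : ℝ | ∃ Λ : Θ → ℝ, (∀ θ, 0 ≤ Λ θ) ∧ (∑ θ, Λ θ) = 1 ∧
          u = (∑ θ, c ρ θ * Λ θ) + (1 / ω) * (-∑ θ, Λ θ * Real.log (Λ θ)) } } v ∧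
      IsGreatest { w : ℝ | ∃ Λ : Θ → ℝ, (∀ θ, 0 ≤ Λ θ) ∧ (∑ θ, Λ θ) = 1 ∧
        w = sInf { u : ℝ | ∃ ρ ∈ Dbar,
          u = (∑ θ, c ρ θ * Λ θ) + (1 / ω) * (-∑ θ, Λ θ * Real.log (Λ θ)) } } v := by
  classical
  -- continuity of c in ρ
  have hc : ∀ θ, Continuous fun ρ => c ρ θ :=
    fun θ => affine_continuous' _ (fun x y t => haff θ x y t)
  -- the value function f
  set f : (Fin n → ℝ) → ℝ :=
    fun ρ => (1 / ω) * Real.log (∑ θ, Real.exp (ω * c ρ θ)) with hfdef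
  have hsumexp_pos : ∀ ρ, 0 < ∑ θ, Real.exp (ω * c ρ θ) :=
    fun ρ => sumexp_pos' (fun θ => ω * c ρ θ)
  have hfcont : Continuous f := by
    apply continuous_const.mul
    apply Continuous.log
    · exact continuous_finset_sum _ (fun θ _ => (continuous_const.mul (hc θ)).rexp)
    · exact fun ρ => (hsumexp_pos ρ).ne'
  -- the Lagrangian
  set Lbar : (Fin n → ℝ) → (Θ → ℝ) → ℝ :=
    fun ρ Λ => (∑ θ, c ρ θ * Λ θ) + (1 / ω) * (-∑ θ, Λ θ * Real.log (Λ θ)) with hLbardef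
  -- key: Lbar ρ Λ ≤ f ρ for feasible Λ
  have hk1 : ∀ ρ (Λ : Θ → ℝ), (∀ θ, 0 ≤ Λ θ) → (∑ θ, Λ θ) = 1 → Lbar ρ Λ ≤ f ρ := by
    intro ρ Λ h0 h1
    have h := gibbs_le' (fun θ => ω * c ρ θ) Λ h0 h1
    have hrw : ∑ θ, Λ θ * (ω * c ρ θ) = ω * ∑ θ, c ρ θ * Λ θ := by
      rw [Finset.mul_sum]
      exact Finset.sum_congr rfl fun θ _ => by ring
    rw [hrw] at h
    exact scale_le' ω _ _ _ hω h
  -- the softmax distribution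
  set P : (Fin n → ℝ) → Θ → ℝ :=
    fun ρ θ => Real.exp (ω * c ρ θ) / ∑ θ', Real.exp (ω * c ρ θ') with hPdef
  have hP0 : ∀ ρ θ, 0 ≤ P ρ θ := fun ρ θ => softmax_nonneg' (fun θ' => ω * c ρ θ') θ
  have hP1 : ∀ ρ, ∑ θ, P ρ θ = 1 := fun ρ => softmax_sum_one' (fun θ' => ω * c ρ θ')
  have hk2 : ∀ ρ, Lbar ρ (P ρ) = f ρ := by
    intro ρ
    have h := gibbs_eq' (fun θ => ω * c ρ θ)
    have hrw : ∑ θ, P ρ θ * (ω * c ρ θ) = ω * ∑ θ, c ρ θ * P ρ θ := by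
      rw [Finset.mul_sum]
      exact Finset.sum_congr rfl fun θ _ => by ring
    rw [hrw] at h
    exact scale_eq' ω _ _ _ hω h
  -- sSup of the inner set equals f ρ
  have hk3 : ∀ ρ, sSup { u : ℝ | ∃ Λ : Θ → ℝ, (∀ θ, 0 ≤ Λ θ) ∧ (∑ θ, Λ θ) = 1 ∧
      u = (∑ θ, c ρ θ * Λ θ) + (1 / ω) * (-∑ θ, Λ θ * Real.log (Λ θ)) } = f ρ := by
    intro ρ
    apply IsGreatest.csSup_eq
    constructor
    · exact ⟨P ρ, hP0 ρ, hP1 ρ, (hk2 ρ).symm⟩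
    · rintro u ⟨Λ, h0, h1, rfl⟩
      exact hk1 ρ Λ h0 h1
  -- minimizer of f on Dbar
  obtain ⟨ρ₀, hρ₀D, hρ₀min⟩ := hcomp.exists_isMinOn hne hfcont.continuousOn
  refine ⟨f ρ₀, ⟨⟨ρ₀, hρ₀D, (hk3 ρ₀).symm⟩, ?_⟩, ?_⟩
  · rintro w ⟨ρ, hρ, rfl⟩
    rw [hk3 ρ]
    exact hρ₀min hρ
  -- second part : IsGreatest
  -- Danskin: for all ρ ∈ Dbar, ∑ P ρ₀ θ * c ρ₀ θ ≤ ∑ P ρ₀ θ * c ρ θ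
  have hk4 : ∀ ρ ∈ Dbar, Lbar ρ₀ (P ρ₀) ≤ Lbar ρ (P ρ₀) := by
    intro ρ hρ
    have hdir := softmax_min_dir' ω hω (c ρ₀) (c ρ) ?_
    · simp only [hLbardef]
      have : ∑ θ, c ρ₀ θ * P ρ₀ θ ≤ ∑ θ, c ρ θ * P ρ₀ θ := by
        have hl : ∑ θ, c ρ₀ θ * P ρ₀ θ = ∑ θ, P ρ₀ θ * c ρ₀ θ :=
          Finset.sum_congr rfl fun θ _ => mul_comm _ _
        have hr : ∑ θ, c ρ θ * P ρ₀ θ = ∑ θ, P ρ₀ θ * c ρ θ :=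
          Finset.sum_congr rfl fun θ _ => mul_comm _ _
        rw [hl, hr]
        exact hdir
      linarith
    · intro t ht
      have hρtD : t • ρ + (1 - t) • ρ₀ ∈ Dbar :=
        hconv hρ hρ₀D ht.1 (by linarith [ht.2]) (by ring)
      have hmin : f ρ₀ ≤ f (t • ρ + (1 - t) • ρ₀) := hρ₀min hρtD
      have hcθ : ∀ θ, c (t • ρ + (1 - t) • ρ₀) θ = (1 - t) * c ρ₀ θ + t * c ρ θ := by
        intro θ
        rw [haff θ ρ ρ₀ t]
        ring
      simp only [hfdef] at hmin
      have hrw : ∑ θ, Real.exp (ω * c (t • ρ + (1 - t) • ρ₀) θ)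
          = ∑ θ, Real.exp (ω * ((1 - t) * c ρ₀ θ + t * c ρ θ)) :=
        Finset.sum_congr rfl fun θ _ => by rw [hcθ θ]
      rw [hrw] at hmin
      have hωinv : (0:ℝ) < 1 / ω := by positivity
      exact le_of_mul_le_mul_left (by linarith [hmin]) hωinv
  -- inner set for fixed Λ equals an image of the compact set
  have himage : ∀ Λ : Θ → ℝ,
      { u : ℝ | ∃ ρ ∈ Dbar, u = Lbar ρ Λ } = (fun ρ => Lbar ρ Λ) '' Dbar := by
    intro Λ
    ext u
    simp only [Set.mem_setOf_eq, Set.mem_image]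
    constructor
    · rintro ⟨ρ, hρ, rfl⟩; exact ⟨ρ, hρ, rfl⟩
    · rintro ⟨ρ, hρ, rfl⟩; exact ⟨ρ, hρ, rfl⟩
  have hLcont : ∀ Λ : Θ → ℝ, Continuous fun ρ => Lbar ρ Λ := by
    intro Λ
    apply Continuous.add
    · exact continuous_finset_sum _ (fun θ _ => (hc θ).mul continuous_const)
    · exact continuous_const
  have hbdd : ∀ Λ : Θ → ℝ, BddBelow { u : ℝ | ∃ ρ ∈ Dbar, u = Lbar ρ Λ } := by
    intro Λ
    rw [himage Λ]
    exact (hcomp.image (hLcont Λ)).bddBelow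
  constructor
  · -- membership : v attained at Λ* = P ρ₀
    refine ⟨P ρ₀, hP0 ρ₀, hP1 ρ₀, ?_⟩
    have : IsLeast { u : ℝ | ∃ ρ ∈ Dbar,
        u = (∑ θ, c ρ θ * P ρ₀ θ) + (1 / ω) * (-∑ θ, P ρ₀ θ * Real.log (P ρ₀ θ)) }
        (f ρ₀) := by
      constructor
      · exact ⟨ρ₀, hρ₀D, (hk2 ρ₀).symm⟩
      · rintro u ⟨ρ, hρ, rfl⟩
        calc f ρ₀ = Lbar ρ₀ (P ρ₀) := (hk2 ρ₀).symm
        _ ≤ Lbar ρ (P ρ₀) := hk4 ρ hρ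
    exact (this.csInf_eq).symm
  · -- upper bound
    rintro w ⟨Λ, h0, h1, rfl⟩
    have hmem : Lbar ρ₀ Λ ∈ { u : ℝ | ∃ ρ ∈ Dbar, u = Lbar ρ Λ } := ⟨ρ₀, hρ₀D, rfl⟩
    calc sInf { u : ℝ | ∃ ρ ∈ Dbar,
          u = (∑ θ, c ρ θ * Λ θ) + (1 / ω) * (-∑ θ, Λ θ * Real.log (Λ θ)) }
        ≤ Lbar ρ₀ Λ := csInf_le (hbdd Λ) hmem
      _ ≤ f ρ₀ := hk1 ρ₀ Λ h0 h1
end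

section
/- (CVaR of a finitely supported distribution converges to its maximum as the risk level tends to zero.) Let M be a positive natural number, let z : Fin M → ℝ be the support values, and let p : Fin M → ℝ be probabilities with p i ≥ 0 for all i and Σ_i p i = 1, with at least one p i > 0. For α ∈ (0, 1], define CVaR_α := inf_{c ∈ ℝ} ( c + (1/α) · Σ_i p i · max (z i - c) 0 ). Then CVaR_α tends to max { z i | p i > 0 } as α tends to 0 from the right. -/
/-- CVaR of a finitely supported distribution converges to its maximum as the risk
level tends to zero: with `CVaR_α = inf_c ( c + (1/α) Σ_i p i * max (z i - c) 0 )`,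
`CVaR_α → max { z i | p i > 0 }` as `α → 0⁺`. -/
theorem cvar_tendsto_max_of_support
    {M : ℕ} (hM : 0 < M) (z p : Fin M → ℝ)
    (hp0 : ∀ i, 0 ≤ p i) (hp1 : (∑ i, p i) = 1) (hpos : ∃ i, 0 < p i) :
    Filter.Tendsto
      (fun α : ℝ => ⨅ c : ℝ, (c + (1 / α) * ∑ i, p i * max (z i - c) 0))
      (nhdsWithin 0 (Set.Ioi 0))
      (nhds (sSup { x : ℝ | ∃ i, 0 < p i ∧ z i = x })) := by
  obtain ⟨j, hj⟩ := hpos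
  set S : Set ℝ := {x : ℝ | ∃ i, 0 < p i ∧ z i = x} with hS
  have hfin : S.Finite := by
    have hsub : S ⊆ Set.range z := by rintro x ⟨i, _, rfl⟩; exact ⟨i, rfl⟩
    exact (Set.finite_range z).subset hsub
  have hne : S.Nonempty := ⟨z j, j, hj, rfl⟩
  have hbdd : BddAbove S := hfin.bddAbove
  have hmem : sSup S ∈ S := hne.csSup_mem hfin
  obtain ⟨i₀, hpi₀, hzi₀⟩ := hmem
  set m := sSup S with hm
  have hle : ∀ i, 0 < p i → z i ≤ m := fun i hi => le_csSup hbdd ⟨i, hi, rfl⟩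
  have key : ∀ α ∈ Set.Ioc (0:ℝ) (p i₀),
      (⨅ c : ℝ, (c + (1/α) * ∑ i, p i * max (z i - c) 0)) = m := by
    rintro α ⟨hα0, hα1⟩
    have hsum_nonneg : ∀ c : ℝ, ∀ i : Fin M, 0 ≤ p i * max (z i - c) 0 :=
      fun c i => mul_nonneg (hp0 i) (le_max_right _ _)
    have hlow : ∀ c : ℝ, m ≤ c + (1/α) * ∑ i, p i * max (z i - c) 0 := by
      intro c
      have h1 : p i₀ * max (z i₀ - c) 0 ≤ ∑ i, p i * max (z i - c) 0 :=
        Finset.single_le_sum (fun i _ => hsum_nonneg c i) (Finset.mem_univ i₀)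
      rcases le_or_gt m c with h | h
      · have hnn : (0:ℝ) ≤ (1/α) * ∑ i, p i * max (z i - c) 0 :=
          mul_nonneg (by positivity) (Finset.sum_nonneg fun i _ => hsum_nonneg c i)
        linarith
      · have hmax : max (z i₀ - c) 0 = m - c := by
          rw [hzi₀]; exact max_eq_left (by linarith)
        have h2 : (1/α) * (p i₀ * (m - c)) ≤ (1/α) * ∑ i, p i * max (z i - c) 0 := by
          apply mul_le_mul_of_nonneg_left _ (by positivity)
          rw [← hmax]; exact h1
        have hfrac : (1:ℝ) ≤ p i₀ / α := (one_le_div hα0).2 hα1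
        have h3 : m - c ≤ (1/α) * (p i₀ * (m - c)) := by
          have heq : (1/α) * (p i₀ * (m - c)) = (p i₀ / α) * (m - c) := by ring
          rw [heq]
          nlinarith
        linarith
    have hval : m + (1/α) * ∑ i, p i * max (z i - m) 0 = m := by
      have hz : ∀ i : Fin M, p i * max (z i - m) 0 = 0 := by
        intro i
        rcases (hp0 i).eq_or_lt with h | h
        · rw [← h]; ring
        · rw [max_eq_right (by linarith [hle i h])]; ring
      rw [Finset.sum_eq_zero fun i _ => hz i]; ring
    apply le_antisymm
    · exact ciInf_le_of_le ⟨m, by rintro x ⟨c, rfl⟩; exact hlow c⟩ m (le_of_eq hval)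
    · exact le_ciInf hlow
  have hev : (fun α : ℝ => ⨅ c : ℝ, (c + (1/α) * ∑ i, p i * max (z i - c) 0))
      =ᶠ[nhdsWithin 0 (Set.Ioi 0)] (fun _ => m) := by
    filter_upwards [Ioc_mem_nhdsGT_of_mem (Set.mem_Ico.2 ⟨le_refl 0, hpi₀⟩)] with α hα
    exact key α hα
  exact Filter.Tendsto.congr' hev.symm tendsto_const_nhds
end
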